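/- Let P be an orthogonal projector and M a matrix of compatible size. Then for every integer q ≥ 0, ‖P M‖_2 ≤ ‖P (M M^T)^q M‖_2^{1/(2q+1)}. -/

import Mathlib

open Matrix MeasureTheory ProbabilityTheory

noncomputable def spec {m n : ℕ} (A : Matrix (Fin m) (Fin n) ℝ) : ℝ :=
  ‖LinearMap.toContinuousLinearMap (Matrix.toEuclideanLin A)‖

noncomputable def eigDesc {n : ℕ} {M : Matrix (Fin n) (Fin n) ℝ} (hM : M.IsHermitian)
    (j : Fin n) : ℝ :=
  hM.eigenvalues (Tuple.sort hM.eigenvalues j.rev)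

noncomputable def svDesc {m n : ℕ} (A : Matrix (Fin m) (Fin n) ℝ) (j : Fin n) : ℝ :=
  Real.sqrt (eigDesc (Matrix.isHermitian_conjTranspose_mul_self A) j)

noncomputable def sqrtM {n : ℕ} {M : Matrix (Fin n) (Fin n) ℝ} (hM : M.PosDef) :
    Matrix (Fin n) (Fin n) ℝ :=
  hM.posSemidef.1.eigenvectorUnitary.1 * diagonal ((↑) ∘ (√·) ∘ hM.posSemidef.1.eigenvalues) *
    (star hM.posSemidef.1.eigenvectorUnitary : Matrix (Fin n) (Fin n) ℝ)

def IsMoorePenrose {m n : ℕ} (A : Matrix (Fin m) (Fin n) ℝ)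
    (B : Matrix (Fin n) (Fin m) ℝ) : Prop :=
  A * B * A = A ∧ B * A * B = B ∧ (A * B)ᵀ = A * B ∧ (B * A)ᵀ = B * A


section Stmt9Aux

open ContinuousLinearMap
open scoped RealInnerProductSpace

noncomputable def toCLM {m n : ℕ} (A : Matrix (Fin m) (Fin n) ℝ) :
    EuclideanSpace ℝ (Fin n) →L[ℝ] EuclideanSpace ℝ (Fin m) :=
  LinearMap.toContinuousLinearMap (Matrix.toEuclideanLin A)

lemma spec_eq_norm_toCLM {m n : ℕ} (A : Matrix (Fin m) (Fin n) ℝ) :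
    spec A = ‖toCLM A‖ := rfl

lemma toCLM_mul {m k n : ℕ} (A : Matrix (Fin m) (Fin k) ℝ) (B : Matrix (Fin k) (Fin n) ℝ) :
    toCLM (A * B) = toCLM A ∘L toCLM B := by
  ext x
  simp [toCLM, Matrix.toEuclideanLin_apply, Matrix.mulVec_mulVec]

lemma toCLM_one {m : ℕ} : toCLM (1 : Matrix (Fin m) (Fin m) ℝ) = 1 := by
  ext x
  simp [toCLM, Matrix.toEuclideanLin_apply]

lemma toCLM_pow {m : ℕ} (A : Matrix (Fin m) (Fin m) ℝ) (k : ℕ) :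
    toCLM (A ^ k) = (toCLM A) ^ k := by
  induction k with
  | zero => simpa using toCLM_one
  | succ k ih => rw [pow_succ, toCLM_mul, ih, pow_succ]; rfl

lemma toCLM_transpose {m n : ℕ} (A : Matrix (Fin m) (Fin n) ℝ) :
    toCLM Aᵀ = ContinuousLinearMap.adjoint (toCLM A) := by
  rw [toCLM, toCLM, ← Matrix.conjTranspose_eq_transpose_of_trivial,
    Matrix.toEuclideanLin_conjTranspose_eq_adjoint, LinearMap.adjoint_toContinuousLinearMap]



set_option maxHeartbeats 1000000 in
lemma key_op {m n : ℕ} (p : EuclideanSpace ℝ (Fin m) →L[ℝ] EuclideanSpace ℝ (Fin m))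
    (hp : p * p = p) (hpa : ContinuousLinearMap.adjoint p = p)
    (f : EuclideanSpace ℝ (Fin n) →L[ℝ] EuclideanSpace ℝ (Fin m)) (t : ℕ) (ht : t ≠ 0) :
    ‖ContinuousLinearMap.adjoint f ∘L p‖ ^ (2 * t) ≤
      ‖p * (f ∘L ContinuousLinearMap.adjoint f) ^ t * p‖ := by
  set s : EuclideanSpace ℝ (Fin m) →L[ℝ] EuclideanSpace ℝ (Fin m) :=
    f ∘L ContinuousLinearMap.adjoint f with hs
  have hsa : ContinuousLinearMap.adjoint s = s := by
    rw [hs, ContinuousLinearMap.adjoint_comp, ContinuousLinearMap.adjoint_adjoint]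
  have hspow : ∀ a : ℕ, ContinuousLinearMap.adjoint (s ^ a) = s ^ a := by
    intro a
    rw [← ContinuousLinearMap.star_eq_adjoint, star_pow, ContinuousLinearMap.star_eq_adjoint, hsa]
  set c : ℝ := ‖p * s ^ t * p‖ with hc
  have hc0 : (0 : ℝ) ≤ c := norm_nonneg _
  have htR : ((2 * t : ℕ) : ℝ) ≠ 0 := by
    simp; omega
  -- main pointwise bound
  have main : ∀ u : EuclideanSpace ℝ (Fin m), ‖u‖ ≤ 1 →
      ‖(ContinuousLinearMap.adjoint f ∘L p) u‖ ^ (2 * t) ≤ c := by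
    intro u hu
    set v : EuclideanSpace ℝ (Fin m) := p u with hv
    set g : ℕ → ℝ := (fun k => ⟪v, (s ^ k) v⟫) with hg
    have hshift : ∀ a b : ℕ, g (a + b) = ⟪(s ^ a) v, (s ^ b) v⟫ := by
      intro a b
      show ⟪v, (s ^ (a + b)) v⟫ = _
      rw [pow_add, ContinuousLinearMap.mul_apply, ← ContinuousLinearMap.adjoint_inner_left (s ^ a),
        hspow]
    have hfstep : ∀ x y : EuclideanSpace ℝ (Fin m),
        ⟪x, s y⟫ = ⟪ContinuousLinearMap.adjoint f x, ContinuousLinearMap.adjoint f y⟫ := by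
      intro x y
      show ⟪x, f (ContinuousLinearMap.adjoint f y)⟫ = _
      rw [← ContinuousLinearMap.adjoint_inner_left f]
    have hg_even : ∀ a : ℕ, g (2 * a) = ‖(s ^ a) v‖ ^ 2 := by
      intro a
      rw [two_mul, hshift, real_inner_self_eq_norm_sq]
    have hg_odd : ∀ a : ℕ, g (2 * a + 1) = ‖ContinuousLinearMap.adjoint f ((s ^ a) v)‖ ^ 2 := by
      intro a
      have h1 : 2 * a + 1 = a + (a + 1) := by ring
      have h2 : (s ^ (a + 1)) v = s ((s ^ a) v) := by
        rw [pow_succ']; rfl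
      rw [h1, hshift, h2, hfstep, real_inner_self_eq_norm_sq]
    have hg_nonneg : ∀ k, 0 ≤ g k := by
      intro k
      rcases Nat.even_or_odd k with ⟨a, ha⟩ | ⟨a, ha⟩
      · have : k = 2 * a := by omega
        rw [this, hg_even]; positivity
      · have : k = 2 * a + 1 := by omega
        rw [this, hg_odd]; positivity
    have hlc : ∀ k, g (k + 1) ^ 2 ≤ g k * g (k + 2) := by
      intro k
      rcases Nat.even_or_odd k with ⟨a, ha⟩ | ⟨a, ha⟩
      · have hk : k = 2 * a := by omega
        subst hk
        have h1 : 2 * a + 1 = a + (a + 1) := by ring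
        have h2 : 2 * a = a + a := by ring
        have h3 : 2 * a + 2 = (a + 1) + (a + 1) := by ring
        rw [h1, h3, h2, hshift, hshift, hshift, sq]
        exact real_inner_mul_inner_self_le _ _
      · have hk : k = 2 * a + 1 := by omega
        subst hk
        have h1 : 2 * a + 1 + 1 = a + (a + 2) := by ring
        have h2 : (s ^ (a + 2)) v = s ((s ^ (a + 1)) v) := by
          rw [pow_succ']; rfl
        have h3 : g (2 * a + 1 + 1) =
            ⟪ContinuousLinearMap.adjoint f ((s ^ a) v),
              ContinuousLinearMap.adjoint f ((s ^ (a + 1)) v)⟫ := by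
          rw [h1, hshift, h2, hfstep]
        have h4 : 2 * a + 1 + 2 = 2 * (a + 1) + 1 := by ring
        rw [h3, h4, hg_odd, hg_odd, sq, ← real_inner_self_eq_norm_sq, ← real_inner_self_eq_norm_sq]
        exact real_inner_mul_inner_self_le _ _
    have hQ : ∀ k, g 1 * g (k + 1) ≤ g 0 * g (k + 2) := by
      intro k
      induction k with
      | zero =>
        have := hlc 0
        rw [sq] at this
        exact this
      | succ k ih =>
        rcases (hg_nonneg (k + 2)).eq_or_lt with h0 | hpos
        · rw [← h0, mul_zero]
          exact mul_nonneg (hg_nonneg 0) (hg_nonneg (k + 3))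
        · have A : g 1 * (g (k + 2) * g (k + 2)) ≤ g 1 * (g (k + 1) * g (k + 3)) := by
            apply mul_le_mul_of_nonneg_left _ (hg_nonneg 1)
            have := hlc (k + 1)
            rw [sq] at this
            exact this
          have C : g 1 * g (k + 1) * g (k + 3) ≤ g 0 * g (k + 2) * g (k + 3) :=
            mul_le_mul_of_nonneg_right ih (hg_nonneg (k + 3))
          have D : g 1 * g (k + 2) * g (k + 2) ≤ g 0 * g (k + 3) * g (k + 2) := by nlinarith
          exact le_of_mul_le_mul_right D hpos
    have hP : ∀ k, g 1 ^ (k + 1) ≤ g (k + 1) * g 0 ^ k := by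
      intro k
      induction k with
      | zero => simp
      | succ k ih =>
        have A : g 1 ^ (k + 2) = g 1 ^ (k + 1) * g 1 := by ring
        have B : g 1 ^ (k + 1) * g 1 ≤ g (k + 1) * g 0 ^ k * g 1 :=
          mul_le_mul_of_nonneg_right ih (hg_nonneg 1)
        have C : g (k + 1) * g 0 ^ k * g 1 = g 1 * g (k + 1) * g 0 ^ k := by ring
        have D : g 1 * g (k + 1) * g 0 ^ k ≤ g 0 * g (k + 2) * g 0 ^ k :=
          mul_le_mul_of_nonneg_right (hQ k) (pow_nonneg (hg_nonneg 0) k)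
        have E : g 0 * g (k + 2) * g 0 ^ k = g (k + 2) * g 0 ^ (k + 1) := by ring
        linarith
    have hvle : ‖v‖ ≤ ‖u‖ := by
      have h1 : ‖v‖ ^ 2 = ⟪u, v⟫ := by
        rw [← real_inner_self_eq_norm_sq, hv]
        nth_rewrite 1 [← hpa]
        rw [ContinuousLinearMap.adjoint_inner_left, ← ContinuousLinearMap.mul_apply, hp]
      rcases (norm_nonneg v).eq_or_lt with h0 | hvpos
      · rw [← h0]; exact norm_nonneg u
      · have h2 : ‖v‖ * ‖v‖ ≤ ‖u‖ * ‖v‖ := by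
          rw [← sq, h1]
          exact real_inner_le_norm u v
        exact le_of_mul_le_mul_right h2 hvpos
    have hg0 : g 0 ≤ 1 := by
      have := hg_even 0
      simp only [mul_zero, pow_zero] at this
      rw [show (0 : ℕ) = 2 * 0 by ring, hg_even]
      have : ‖(s ^ 0) v‖ = ‖v‖ := by rw [pow_zero]; rfl
      rw [this]
      calc ‖v‖ ^ 2 ≤ ‖u‖ ^ 2 := by
            apply pow_le_pow_left₀ (norm_nonneg v) hvle
        _ ≤ 1 := by nlinarith [norm_nonneg u]
    have hgt : g t ≤ c := by
      have h1 : g t = ⟪u, (p * s ^ t * p) u⟫ := by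
        show ⟪p u, (s ^ t) (p u)⟫ = _
        nth_rewrite 1 [← hpa]
        rw [ContinuousLinearMap.adjoint_inner_left]
        rfl
      rw [h1]
      have h2 := real_inner_le_norm u ((p * s ^ t * p) u)
      have h3 := ContinuousLinearMap.le_opNorm (p * s ^ t * p) u
      nlinarith [norm_nonneg u, norm_nonneg ((p * s ^ t * p) u), hc0]
    have hg1 : g 1 = ‖(ContinuousLinearMap.adjoint f ∘L p) u‖ ^ 2 := by
      have := hg_odd 0
      simp only [mul_zero, zero_add, pow_zero] at this
      rw [this]
      rfl
    have hPt : g 1 ^ t ≤ g t * g 0 ^ (t - 1) := by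
      have h := hP (t - 1)
      rwa [Nat.sub_add_cancel (Nat.one_le_iff_ne_zero.mpr ht)] at h
    calc ‖(ContinuousLinearMap.adjoint f ∘L p) u‖ ^ (2 * t)
        = (g 1) ^ t := by rw [hg1, ← pow_mul]
      _ ≤ g t * g 0 ^ (t - 1) := hPt
      _ ≤ c * 1 := by
          apply mul_le_mul hgt _ (pow_nonneg (hg_nonneg 0) _) hc0
          exact pow_le_one₀ (hg_nonneg 0) hg0
      _ = c := mul_one c
  -- opNorm step
  have hAnorm : ‖ContinuousLinearMap.adjoint f ∘L p‖ ≤ c ^ ((1 : ℝ) / (2 * t)) := by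
    apply ContinuousLinearMap.opNorm_le_bound _ (Real.rpow_nonneg hc0 _)
    intro u
    rcases eq_or_ne u 0 with rfl | hu
    · simp
    · have hun : ‖(‖u‖⁻¹ • u : EuclideanSpace ℝ (Fin m))‖ ≤ 1 := by
        rw [norm_smul, norm_inv, norm_norm, inv_mul_cancel₀ (norm_ne_zero_iff.mpr hu)]
      have h2 := main _ hun
      set x : ℝ := ‖(ContinuousLinearMap.adjoint f ∘L p) (‖u‖⁻¹ • u)‖ with hx
      have hx0 : (0 : ℝ) ≤ x := norm_nonneg _
      have hxle : x ≤ c ^ ((1 : ℝ) / (2 * t)) := by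
        calc x = (x ^ (2 * t : ℕ)) ^ ((1 : ℝ) / (2 * t)) := by
              rw [← Real.rpow_natCast x (2 * t), ← Real.rpow_mul hx0]
              push_cast
              rw [mul_one_div, div_self (by push_cast at htR ⊢; exact htR), Real.rpow_one]
          _ ≤ c ^ ((1 : ℝ) / (2 * t)) := by
              apply Real.rpow_le_rpow (pow_nonneg hx0 _) h2
              positivity
      have heq : (ContinuousLinearMap.adjoint f ∘L p) u
          = ‖u‖ • ((ContinuousLinearMap.adjoint f ∘L p) (‖u‖⁻¹ • u)) := by
        rw [_root_.map_smul, smul_smul, mul_inv_cancel₀ (norm_ne_zero_iff.mpr hu), one_smul]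
      rw [heq, norm_smul, norm_norm, mul_comm]
      exact mul_le_mul_of_nonneg_right hxle (norm_nonneg u)
  calc ‖ContinuousLinearMap.adjoint f ∘L p‖ ^ (2 * t)
      ≤ (c ^ ((1 : ℝ) / (2 * t))) ^ (2 * t : ℕ) :=
        pow_le_pow_left₀ (norm_nonneg _) hAnorm _
    _ = c := by
        rw [← Real.rpow_natCast (c ^ ((1 : ℝ) / (2 * t))) (2 * t), ← Real.rpow_mul hc0]
        push_cast
        rw [one_div, inv_mul_cancel₀ (by push_cast at htR ⊢; exact htR), Real.rpow_one]

end Stmt9Aux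

open ContinuousLinearMap in
open scoped RealInnerProductSpace in
/-- if $P$ is an orthogonal projector then for all $q \ge 0$,
$\|PM\|_2 \le \|P(MM^T)^qM\|_2^{1/(2q+1)}$. -/
theorem stmt9 {m n : ℕ} (P : Matrix (Fin m) (Fin m) ℝ)
    (hPidem : P * P = P) (hPsym : Pᵀ = P)
    (M : Matrix (Fin m) (Fin n) ℝ) (q : ℕ) :
    spec (P * M) ≤ (spec (P * (M * Mᵀ) ^ q * M)) ^ ((1 : ℝ) / (2 * q + 1)) := by
  set p := toCLM P with hpdef
  set f := toCLM M with hfdef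
  have hp : p * p = p := by
    rw [show p * p = toCLM (P * P) from (toCLM_mul P P).symm, hPidem]
  have hpa : ContinuousLinearMap.adjoint p = p := by
    rw [← toCLM_transpose, hPsym]
  set s : EuclideanSpace ℝ (Fin m) →L[ℝ] EuclideanSpace ℝ (Fin m) :=
    f ∘L ContinuousLinearMap.adjoint f with hs
  have hsM : toCLM (M * Mᵀ) = s := by rw [toCLM_mul, toCLM_transpose]
  have hsq : toCLM ((M * Mᵀ) ^ q) = s ^ q := by rw [toCLM_pow, hsM]
  have hsa : ContinuousLinearMap.adjoint s = s := by
    rw [hs, ContinuousLinearMap.adjoint_comp, ContinuousLinearMap.adjoint_adjoint]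
  have hsqa : ContinuousLinearMap.adjoint (s ^ q) = s ^ q := by
    rw [← ContinuousLinearMap.star_eq_adjoint, star_pow, ContinuousLinearMap.star_eq_adjoint, hsa]
  set t := 2 * q + 1 with htdef
  -- identify norms
  have hx : spec (P * M) = ‖ContinuousLinearMap.adjoint f ∘L p‖ := by
    rw [spec_eq_norm_toCLM, toCLM_mul]
    rw [← LinearIsometryEquiv.norm_map (ContinuousLinearMap.adjoint) (p ∘L f),
      ContinuousLinearMap.adjoint_comp, hpa]
  set B := (p * s ^ q) ∘L f with hB
  have hy : spec (P * (M * Mᵀ) ^ q * M) = ‖B‖ := by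
    rw [spec_eq_norm_toCLM, toCLM_mul, toCLM_mul, hsq, hB]
    rfl
  have hBadj : ContinuousLinearMap.adjoint B = ContinuousLinearMap.adjoint f ∘L (s ^ q * p) := by
    rw [hB, ContinuousLinearMap.adjoint_comp]
    congr 1
    rw [← ContinuousLinearMap.star_eq_adjoint, StarMul.star_mul, ContinuousLinearMap.star_eq_adjoint,
      ContinuousLinearMap.star_eq_adjoint, hpa, hsqa]
  have hBB : B ∘L ContinuousLinearMap.adjoint B = p * s ^ t * p := by
    rw [hBadj]
    have h1 : B ∘L (ContinuousLinearMap.adjoint f ∘L (s ^ q * p)) =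
        (p * s ^ q) * (f ∘L ContinuousLinearMap.adjoint f) * (s ^ q * p) := rfl
    rw [h1, ← hs]
    have h2 : s ^ q * s * s ^ q = s ^ t := by
      rw [← pow_succ, ← pow_add, htdef]
      congr 1
      omega
    calc (p * s ^ q) * s * (s ^ q * p) = p * (s ^ q * s * s ^ q) * p := by
          simp only [mul_assoc]
      _ = p * s ^ t * p := by rw [h2]
  have hyB : ‖p * s ^ t * p‖ = ‖B‖ * ‖B‖ := by
    rw [← hBB]
    have h1 := ContinuousLinearMap.norm_adjoint_comp_self (ContinuousLinearMap.adjoint B)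
    rw [ContinuousLinearMap.adjoint_adjoint] at h1
    rw [h1, LinearIsometryEquiv.norm_map]
  have hk := key_op p hp hpa f t (by omega)
  rw [← hs] at hk
  rw [hyB] at hk
  -- hk : ‖f† ∘L p‖ ^ (2*t) ≤ ‖B‖ * ‖B‖
  set x := spec (P * M) with hxdef
  set y := spec (P * (M * Mᵀ) ^ q * M) with hydef
  have hx0 : 0 ≤ x := by rw [hx]; exact norm_nonneg _
  have hy0 : 0 ≤ y := by rw [hy]; exact norm_nonneg _
  have h1 : x ^ (2 * t) ≤ y ^ 2 := by
    rw [hx, hy, sq]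
    exact hk
  have h2 : x ^ t ≤ y := by
    apply le_of_pow_le_pow_left₀ two_ne_zero hy0
    calc (x ^ t) ^ 2 = x ^ (2 * t) := by rw [← pow_mul, mul_comm]
      _ ≤ y ^ 2 := h1
  have htR : ((t : ℕ) : ℝ) ≠ 0 := by
    rw [htdef]
    push_cast
    positivity
  calc x = (x ^ t) ^ ((1 : ℝ) / t) := by
        rw [← Real.rpow_natCast x t, ← Real.rpow_mul hx0, mul_one_div, div_self htR,
          Real.rpow_one]
    _ ≤ y ^ ((1 : ℝ) / t) := by
        apply Real.rpow_le_rpow (pow_nonneg hx0 _) h2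
        positivity
    _ = y ^ ((1 : ℝ) / (2 * q + 1)) := by
        rw [htdef]
        push_cast
        ring_nf
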